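/- arXiv:2101.03242 — 2 statements merged into one kernel-verified Lean document; each statement's English description precedes it below -/
import Mathlib

section
/- Let C ∈ ℝ^{m×m}, let α ∈ ℝ^m be a row vector with α·𝟙 = 1, and suppose α e^{Cr} 𝟙 > 0 for all r in an interval [0, h). Then the curve A(r) := (α e^{Cr}) / (α e^{Cr} 𝟙), r ∈ [0, h), satisfies A(0) = α and the ordinary differential equation A'(r) = A(r) C − (A(r) C 𝟙) A(r). -/
open NormedSpace Matrix MeasureTheory Set Filter Topology

lemma expSlopeAux (m : ℕ) (C : Matrix (Fin m) (Fin m) ℝ) (t : ℝ) :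
    Tendsto (slope (fun u : ℝ => exp (u • C)) t) (𝓝[≠] t)
      (𝓝 (C * exp (t • C))) := by
  letI : SeminormedRing (Matrix (Fin m) (Fin m) ℝ) := Matrix.linftyOpSemiNormedRing
  letI : NormedRing (Matrix (Fin m) (Fin m) ℝ) := Matrix.linftyOpNormedRing
  letI : NormedAlgebra ℝ (Matrix (Fin m) (Fin m) ℝ) := Matrix.linftyOpNormedAlgebra
  have h2 := hasDerivAt_iff_tendsto_slope.mp (hasDerivAt_exp_smul_const' (𝕂 := ℝ) C t)
  exact h2

lemma expCommAux (m : ℕ) (C : Matrix (Fin m) (Fin m) ℝ) (t : ℝ) :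
    C * exp (t • C) = exp (t • C) * C := by
  letI : SeminormedRing (Matrix (Fin m) (Fin m) ℝ) := Matrix.linftyOpSemiNormedRing
  letI : NormedRing (Matrix (Fin m) (Fin m) ℝ) := Matrix.linftyOpNormedRing
  letI : NormedAlgebra ℝ (Matrix (Fin m) (Fin m) ℝ) := Matrix.linftyOpNormedAlgebra
  have h2 := (((Commute.refl C).smul_right t).exp_right).eq
  exact h2

attribute [local instance] Matrix.normedAddCommGroup Matrix.normedSpace

lemma expDerivAux (m : ℕ) (C : Matrix (Fin m) (Fin m) ℝ) (t : ℝ) :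
    HasDerivAt (fun u : ℝ => exp (u • C)) (exp (t • C) * C) t := by
  rw [← expCommAux]
  exact hasDerivAt_iff_tendsto_slope.mpr (expSlopeAux m C t)

theorem stmt4 (m : ℕ) (C : Matrix (Fin m) (Fin m) ℝ) (α : Fin m → ℝ)
    (hα : α ⬝ᵥ 1 = 1) (h : ℝ) (hh : 0 < h)
    (hpos : ∀ r ∈ Set.Ico (0:ℝ) h, 0 < vecMul α (exp (r • C)) ⬝ᵥ 1)
    (A : ℝ → (Fin m → ℝ))
    (hA : ∀ r ∈ Set.Ico (0:ℝ) h,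
      A r = (vecMul α (exp (r • C)) ⬝ᵥ 1)⁻¹ • vecMul α (exp (r • C))) :
    A 0 = α ∧
    ∀ r ∈ Set.Ico (0:ℝ) h,
      HasDerivWithinAt A (vecMul (A r) C - (vecMul (A r) C ⬝ᵥ 1) • A r) (Set.Ico 0 h) r := by
  -- the continuous linear map `M ↦ α ᵥ* M`
  let L1lin : Matrix (Fin m) (Fin m) ℝ →ₗ[ℝ] (Fin m → ℝ) :=
    { toFun := fun M => vecMul α M
      map_add' := fun M N => vecMul_add M N α
      map_smul' := by
        intro c M
        ext i
        simp [vecMul, dotProduct, Finset.mul_sum, mul_left_comm, mul_comm] }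
  let L1 : Matrix (Fin m) (Fin m) ℝ →L[ℝ] (Fin m → ℝ) := L1lin.toContinuousLinearMap
  have hL1 : ∀ M, L1 M = vecMul α M := fun _ => rfl
  -- the continuous linear map `v ↦ v ⬝ᵥ 1`
  let L2lin : (Fin m → ℝ) →ₗ[ℝ] ℝ :=
    { toFun := fun v => v ⬝ᵥ 1
      map_add' := fun u v => add_dotProduct u v 1
      map_smul' := fun c v => smul_dotProduct c v 1 }
  let L2 : (Fin m → ℝ) →L[ℝ] ℝ := L2lin.toContinuousLinearMap
  have hL2 : ∀ v, L2 v = v ⬝ᵥ 1 := fun _ => rfl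
  constructor
  · rw [hA 0 ⟨le_rfl, hh⟩]
    simp [hα]
  · intro r hr
    set E := exp (r • C) with hE
    set fr := vecMul α E with hfr
    set w := vecMul fr C with hw
    have hgpos := hpos r hr
    have hne : (fr ⬝ᵥ 1) ≠ 0 := ne_of_gt hgpos
    have hf : HasDerivAt (fun u : ℝ => vecMul α (exp (u • C))) w r := by
      have h0 := L1.hasFDerivAt.comp_hasDerivAt r (expDerivAux m C r)
      have h1 : vecMul α (exp (r • C) * C) = w := by
        rw [← vecMul_vecMul, ← hE, ← hfr, ← hw]
      simpa [Function.comp_def, hL1] using h0.congr_deriv (show L1 (exp (r • C) * C) = w from h1)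
    have hg : HasDerivAt (fun u : ℝ => vecMul α (exp (u • C)) ⬝ᵥ 1) (w ⬝ᵥ 1) r := by
      have h0 := L2.hasFDerivAt.comp_hasDerivAt r hf
      simpa [Function.comp_def, hL2] using h0
    have hF := (hg.inv hne).smul hf
    have key : HasDerivWithinAt A
        ((fr ⬝ᵥ 1)⁻¹ • w + (-(w ⬝ᵥ 1) / (fr ⬝ᵥ 1) ^ 2) • fr) (Set.Ico 0 h) r :=
      (hF.hasDerivWithinAt).congr (fun y hy => hA y hy) (hA r hr)
    have harith : vecMul (A r) C - (vecMul (A r) C ⬝ᵥ 1) • A r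
        = (fr ⬝ᵥ 1)⁻¹ • w + (-(w ⬝ᵥ 1) / (fr ⬝ᵥ 1) ^ 2) • fr := by
      rw [hA r hr]
      rw [smul_vecMul, ← hfr, ← hw, smul_dotProduct, smul_eq_mul, smul_smul,
        sub_eq_add_neg, ← neg_smul]
      congr 1
      field_simp
    rw [harith]
    exact key
end

section
/- Let C⁺ have all eigenvalues with strictly negative real part, D^{−+} ∈ ℝ^{m⁻×m⁺}, Ψ ∈ ℝ^{m⁺×m⁻}, and define Υ₁(x) := e^{C⁺x} and Υ_{n+1}(x) := ∫₀^x e^{C⁺y} Ψ D^{−+} Υ_n(x−y) dy for n ≥ 1. Suppose the partial sums Σ_{n=1}^N Υ_n(x) are uniformly bounded on compact intervals and converge pointwise to Υ(x). Then Υ(x) = e^{(C⁺ + Ψ D^{−+})x} for all x ≥ 0. -/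
open NormedSpace Matrix MeasureTheory Set Filter

attribute [local instance] Matrix.normedAddCommGroup Matrix.normedSpace

variable {p : ℕ}

noncomputable instance matENormedAddCommMonoid (m : ℕ) : ENormedAddCommMonoid (Matrix (Fin m) (Fin m) ℝ) :=
  (NormedAddCommGroup.toENormedAddCommMonoid : ENormedAddCommMonoid (Matrix (Fin m) (Fin m) ℝ))

/-- matrix multiplication as a continuous bilinear map (w.r.t. the sup norm) -/
noncomputable def mulCLM (p : ℕ) :
    Matrix (Fin p) (Fin p) ℝ →L[ℝ] Matrix (Fin p) (Fin p) ℝ →L[ℝ] Matrix (Fin p) (Fin p) ℝ :=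
  LinearMap.toContinuousLinearMap <|
    (LinearMap.toContinuousLinearMap :
        (Matrix (Fin p) (Fin p) ℝ →ₗ[ℝ] Matrix (Fin p) (Fin p) ℝ) ≃ₗ[ℝ]
        (Matrix (Fin p) (Fin p) ℝ →L[ℝ] Matrix (Fin p) (Fin p) ℝ)).toLinearMap.comp
      (LinearMap.mul ℝ (Matrix (Fin p) (Fin p) ℝ))

@[simp] lemma mulCLM_apply (X Y : Matrix (Fin p) (Fin p) ℝ) : mulCLM p X Y = X * Y := rfl

lemma HasDerivAt.matmul {f g : ℝ → Matrix (Fin p) (Fin p) ℝ}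
    {f' g' : Matrix (Fin p) (Fin p) ℝ} {t : ℝ}
    (hf : HasDerivAt f f' t) (hg : HasDerivAt g g' t) :
    HasDerivAt (fun u => f u * g u) (f' * g t + f t * g') t := by
  have hf' : ∀ i k, HasDerivAt (fun u => f u i k) (f' i k) t := fun i k =>
    hasDerivAt_pi.1 (hasDerivAt_pi.1 (by exact hf) i) k
  have hg' : ∀ i k, HasDerivAt (fun u => g u i k) (g' i k) t := fun i k =>
    hasDerivAt_pi.1 (hasDerivAt_pi.1 (by exact hg) i) k
  have key := (hasDerivAt_pi (φ := fun u => ((f u * g u : Matrix (Fin p) (Fin p) ℝ) : Fin p → Fin p → ℝ))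
    (φ' := ((f' * g t + f t * g' : Matrix (Fin p) (Fin p) ℝ) : Fin p → Fin p → ℝ)) (x := t)).2
    fun i => hasDerivAt_pi.2 fun j => by
      simp only [Matrix.add_apply, Matrix.mul_apply, ← Finset.sum_add_distrib]
      exact HasDerivAt.fun_sum fun k _ => (hf' i k).mul (hg' k j)
  exact key

noncomputable abbrev eucCLM (p : ℕ) := Matrix.toEuclideanCLM (𝕜 := ℝ) (n := Fin p)

noncomputable def eucCLE (p : ℕ) :
    Matrix (Fin p) (Fin p) ℝ ≃L[ℝ] (EuclideanSpace ℝ (Fin p) →L[ℝ] EuclideanSpace ℝ (Fin p)) :=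
  LinearEquiv.toContinuousLinearEquiv
    { toFun := eucCLM p, invFun := (eucCLM p).symm,
      map_add' := map_add _, map_smul' := map_smul _,
      left_inv := (eucCLM p).left_inv, right_inv := (eucCLM p).right_inv }

lemma eucCLE_apply (M : Matrix (Fin p) (Fin p) ℝ) : eucCLE p M = eucCLM p M := rfl

lemma eucCLM_exp (M : Matrix (Fin p) (Fin p) ℝ) :
    eucCLM p (exp M) = exp (eucCLM p M) := by
  rw [exp_eq_tsum ℝ, exp_eq_tsum ℝ, ← eucCLE_apply, (eucCLE p).map_tsum]
  refine tsum_congr fun n => ?_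
  rw [_root_.map_smul, eucCLE_apply, map_pow]

lemma expM_comm (M : Matrix (Fin p) (Fin p) ℝ) (N : Matrix (Fin p) (Fin p) ℝ) (h : Commute M N) :
    Commute (exp M) N := h.exp_left

lemma hasDerivAt_expM (A : Matrix (Fin p) (Fin p) ℝ) (t : ℝ) :
    HasDerivAt (fun u : ℝ => exp (u • A)) (exp (t • A) * A) t := by
  have h := hasDerivAt_exp_smul_const (𝕂 := ℝ) (eucCLM p A) t
  have h2 := ((eucCLE p).symm.toContinuousLinearMap.hasFDerivAt.comp_hasDerivAt t h :
    HasDerivAt (⇑(eucCLE p).symm.toContinuousLinearMap ∘ fun u : ℝ => exp (u • eucCLM p A))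
      ((eucCLE p).symm.toContinuousLinearMap (exp (t • eucCLM p A) * eucCLM p A)) t)
  have key : ∀ u : ℝ, (eucCLE p).symm (exp (u • eucCLM p A)) = exp (u • A) := by
    intro u
    have h3 : (u : ℝ) • eucCLM p A = eucCLM p (u • A) := (_root_.map_smul _ _ _).symm
    rw [h3, ← eucCLM_exp]
    exact (eucCLE p).symm_apply_apply _
  have keyd : (eucCLE p).symm (exp (t • eucCLM p A) * eucCLM p A) = exp (t • A) * A := by
    have h3 : (t : ℝ) • eucCLM p A = eucCLM p (t • A) := (_root_.map_smul _ _ _).symm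
    rw [h3, ← eucCLM_exp, ← _root_.map_mul]
    exact (eucCLE p).symm_apply_apply _
  have hfun : (⇑(eucCLE p).symm.toContinuousLinearMap ∘ fun u : ℝ => exp (u • eucCLM p A))
      = fun u : ℝ => exp (u • A) := funext fun u => key u
  have hd : (eucCLE p).symm.toContinuousLinearMap (exp (t • eucCLM p A) * eucCLM p A)
      = exp (t • A) * A := keyd
  rw [hfun] at h2
  exact h2.congr_deriv hd

lemma continuous_expM (A : Matrix (Fin p) (Fin p) ℝ) :
    Continuous fun u : ℝ => exp (u • A) :=
  continuous_iff_continuousAt.2 fun t => (hasDerivAt_expM A t).continuousAt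

lemma keyE (A B : Matrix (Fin p) (Fin p) ℝ) (x : ℝ) :
    (∫ y in (0:ℝ)..x, exp (y • A) * B * exp ((x - y) • (A + B)))
      = exp (x • (A + B)) - exp (x • A) := by
  set E : ℝ → Matrix (Fin p) (Fin p) ℝ := fun u => exp (u • (A + B)) with hE
  set G : ℝ → Matrix (Fin p) (Fin p) ℝ := fun u => exp (u • (-A)) * B * E u with hG
  have hGc : Continuous G := by
    exact ((continuous_expM (-A)).mul continuous_const).mul (continuous_expM (A + B))
  have hFderiv : ∀ u : ℝ, HasDerivAt (fun v => exp (v • (-A)) * E v) (G u) u := by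
    intro u
    have h := (hasDerivAt_expM (-A) u).matmul (hasDerivAt_expM (A + B) u)
    have hcomm : E u * (A + B) = (A + B) * E u :=
      (expM_comm (u • (A + B)) (A + B) ((Commute.refl (A + B)).smul_left u)).eq
    convert h using 1
    rw [hcomm, hG]
    rw [mul_assoc (exp (u • (-A))) (-A) (E u), ← mul_add, ← add_mul, neg_add_cancel_left,
      ← mul_assoc]
  have ftc : (∫ u in (0:ℝ)..x, G u)
      = exp (x • (-A)) * E x - 1 := by
    have := intervalIntegral.integral_eq_sub_of_hasDerivAt
      (f := fun v => exp (v • (-A)) * E v) (fun u _ => hFderiv u)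
      (hGc.intervalIntegrable 0 x)
    rw [this]
    simp [hE, exp_zero]
  have hsubst : (∫ y in (0:ℝ)..x, exp (y • A) * B * E (x - y))
      = ∫ u in (0:ℝ)..x, exp ((x - u) • A) * B * E u := by
    have := intervalIntegral.integral_comp_sub_left
      (a := (0:ℝ)) (b := x) (fun u => exp ((x - u) • A) * B * E u) x
    simp only [sub_zero, sub_self] at this
    rw [← this]
    congr 1
    ext y
    rw [sub_sub_cancel]
  have hsplit : ∀ u : ℝ, exp ((x - u) • A) * B * E u = exp (x • A) * G u := by
    intro u
    have hc : Commute (x • A) (u • (-A)) :=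
      (((Commute.refl A).neg_right).smul_left x).smul_right u
    have h5 : exp ((x - u) • A) = exp (x • A) * exp (u • (-A)) := by
      have h4 : (x - u) • A = x • A + u • (-A) := by
        rw [sub_smul, smul_neg, ← sub_eq_add_neg]
      rw [h4, Matrix.exp_add_of_commute _ _ hc]
    simp only [hG]
    rw [h5]
    simp only [mul_assoc]
  have hpull : (∫ u in (0:ℝ)..x, exp (x • A) * G u)
      = exp (x • A) * ∫ u in (0:ℝ)..x, G u := by
    have := (mulCLM p (exp (x • A))).intervalIntegral_comp_comm
      (hGc.intervalIntegrable (μ := MeasureTheory.volume) 0 x)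
    exact this
  have hinv : exp (x • A) * exp (x • (-A)) = 1 := by
    have hc : Commute (x • A) (x • (-A)) := (((Commute.refl A).neg_right).smul_left x).smul_right x
    rw [← Matrix.exp_add_of_commute _ _ hc, smul_neg, add_neg_cancel, exp_zero]
  calc (∫ y in (0:ℝ)..x, exp (y • A) * B * E (x - y))
      = ∫ u in (0:ℝ)..x, exp ((x - u) • A) * B * E u := hsubst
    _ = ∫ u in (0:ℝ)..x, exp (x • A) * G u := by
        refine intervalIntegral.integral_congr fun u _ => hsplit u
    _ = exp (x • A) * (exp (x • (-A)) * E x - 1) := by rw [hpull, ftc]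
    _ = exp (x • (A + B)) - exp (x • A) := by
        rw [mul_sub, mul_one, ← mul_assoc, hinv, one_mul]

lemma norm_matmul (X Y : Matrix (Fin p) (Fin p) ℝ) : ‖X * Y‖ ≤ (p:ℝ) * ‖X‖ * ‖Y‖ := by
  have hr : (0:ℝ) ≤ (p:ℝ) * ‖X‖ * ‖Y‖ := by positivity
  rw [Matrix.norm_le_iff hr]
  intro i j
  calc ‖(X * Y) i j‖ = ‖∑ k, X i k * Y k j‖ := by rw [Matrix.mul_apply]
    _ ≤ ∑ k, ‖X i k * Y k j‖ := norm_sum_le _ _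
    _ ≤ ∑ _k : Fin p, ‖X‖ * ‖Y‖ := by
        refine Finset.sum_le_sum fun k _ => ?_
        rw [norm_mul]
        exact mul_le_mul (Matrix.norm_entry_le_entrywise_sup_norm X)
          (Matrix.norm_entry_le_entrywise_sup_norm Y) (norm_nonneg _) (norm_nonneg _)
    _ = (p:ℝ) * ‖X‖ * ‖Y‖ := by
        simp [Finset.sum_const, Finset.card_univ, mul_assoc]

lemma conv_eq (A B : Matrix (Fin p) (Fin p) ℝ) (W : ℝ → Matrix (Fin p) (Fin p) ℝ) (x : ℝ)
    (hW : IntervalIntegrable (fun u => exp (u • (-A)) * B * W u) MeasureTheory.volume 0 x) :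
    (∫ y in (0:ℝ)..x, exp (y • A) * B * W (x - y))
      = exp (x • A) * ∫ u in (0:ℝ)..x, exp (u • (-A)) * B * W u := by
  have hsubst : (∫ y in (0:ℝ)..x, exp (y • A) * B * W (x - y))
      = ∫ u in (0:ℝ)..x, exp ((x - u) • A) * B * W u := by
    have := intervalIntegral.integral_comp_sub_left
      (a := (0:ℝ)) (b := x) (fun u => exp ((x - u) • A) * B * W u) x
    simp only [sub_zero, sub_self] at this
    rw [← this]
    congr 1
    ext y
    rw [sub_sub_cancel]
  have hsplit : ∀ u : ℝ, exp ((x - u) • A) * B * W u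
      = exp (x • A) * (exp (u • (-A)) * B * W u) := by
    intro u
    have hc : Commute (x • A) (u • (-A)) := (((Commute.refl A).neg_right).smul_left x).smul_right u
    have h5 : exp ((x - u) • A) = exp (x • A) * exp (u • (-A)) := by
      have h4 : (x - u) • A = x • A + u • (-A) := by rw [sub_smul, smul_neg, ← sub_eq_add_neg]
      rw [h4, Matrix.exp_add_of_commute _ _ hc]
    rw [h5]
    simp only [mul_assoc]
  rw [hsubst, intervalIntegral.integral_congr (fun u _ => hsplit u)]
  have := (mulCLM p (exp (x • A))).intervalIntegral_comp_comm hW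
  exact this

theorem stmt15 (p q : ℕ) (Cp : Matrix (Fin p) (Fin p) ℝ)
    (hp : ∀ μ ∈ spectrum ℂ (Cp.map (algebraMap ℝ ℂ)), μ.re < 0)
    (D : Matrix (Fin q) (Fin p) ℝ) (Ψ : Matrix (Fin p) (Fin q) ℝ)
    (U : ℕ → ℝ → Matrix (Fin p) (Fin p) ℝ)
    (hU1 : ∀ x : ℝ, U 0 x = exp (x • Cp))
    (hUrec : ∀ n : ℕ, ∀ x : ℝ, 0 ≤ x →
      U (n+1) x = ∫ y in (0:ℝ)..x, exp (y • Cp) * (Ψ * D) * U n (x - y))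
    (Ulim : ℝ → Matrix (Fin p) (Fin p) ℝ)
    (hbdd : ∀ x : ℝ, 0 ≤ x → ∃ K : ℝ, ∀ N : ℕ, ∀ y ∈ Set.Icc (0:ℝ) x,
      ‖∑ n ∈ Finset.range N, U n y‖ ≤ K)
    (hconv : ∀ x : ℝ, 0 ≤ x →
      Tendsto (fun N : ℕ => ∑ n ∈ Finset.range N, U n x) atTop (nhds (Ulim x))) :
    ∀ x : ℝ, 0 ≤ x → Ulim x = exp (x • (Cp + Ψ * D)) := by
  intro x₀ hx₀
  set B := Ψ * D with hB
  set E : ℝ → Matrix (Fin p) (Fin p) ℝ := fun y => exp (y • (Cp + B)) with hEdef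
  set S : ℕ → ℝ → Matrix (Fin p) (Fin p) ℝ := fun N y => ∑ n ∈ Finset.range N, U n y with hSdef
  have hIccI : Icc (0:ℝ) x₀ = uIcc (0:ℝ) x₀ := (uIcc_of_le hx₀).symm
  -- continuity of the iterates
  have hcontU : ∀ n, ContinuousOn (U n) (Icc (0:ℝ) x₀) := by
    intro n
    induction n with
    | zero => exact ((continuous_expM Cp).continuousOn).congr fun y _ => hU1 y
    | succ n ih =>
      have hg : ContinuousOn (fun u => exp (u • (-Cp)) * B * U n u) (Icc (0:ℝ) x₀) :=
        ((continuous_expM (-Cp)).continuousOn.mul continuousOn_const).mul ih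
      have heq : ∀ y ∈ Icc (0:ℝ) x₀,
          U (n+1) y = exp (y • Cp) * ∫ u in (0:ℝ)..y, exp (u • (-Cp)) * B * U n u := by
        intro y hy
        rw [hUrec n y hy.1]
        refine conv_eq Cp B (U n) y ?_
        refine ContinuousOn.intervalIntegrable ?_
        rw [uIcc_of_le hy.1]
        exact hg.mono (Icc_subset_Icc le_rfl hy.2)
      refine ContinuousOn.congr ?_ heq
      refine ((continuous_expM Cp).continuousOn).mul ?_
      have hint : IntegrableOn (fun u => exp (u • (-Cp)) * B * U n u)
          (uIcc (0:ℝ) x₀) MeasureTheory.volume := by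
        rw [← hIccI]
        exact hg.integrableOn_Icc
      exact (intervalIntegral.continuousOn_primitive_interval hint).mono hIccI.le
  have hcontE : Continuous E := continuous_expM (Cp + B)
  have hcontS : ∀ N, ContinuousOn (S N) (Icc (0:ℝ) x₀) := by
    intro N
    refine continuousOn_finset_sum _ fun n _ => hcontU n
  have hcontD : ∀ N, ContinuousOn (fun y => E y - S N y) (Icc (0:ℝ) x₀) :=
    fun N => hcontE.continuousOn.sub (hcontS N)
  -- integrability of convolution-type integrands
  have hconvInt : ∀ (W : ℝ → Matrix (Fin p) (Fin p) ℝ), ContinuousOn W (Icc (0:ℝ) x₀) →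
      ∀ x ∈ Icc (0:ℝ) x₀, IntervalIntegrable (fun y => exp (y • Cp) * B * W (x - y))
        MeasureTheory.volume 0 x := by
    intro W hW x hx
    refine ContinuousOn.intervalIntegrable ?_
    rw [uIcc_of_le hx.1]
    refine ((continuous_expM Cp).continuousOn.mul continuousOn_const).mul ?_
    refine hW.comp ((continuous_const.sub continuous_id).continuousOn) ?_
    intro y hy
    have h1 : x - y ∈ Icc (0:ℝ) x₀ := ⟨sub_nonneg.2 hy.2, by nlinarith [hy.1, hx.2]⟩
    simpa using h1
  -- Volterra equation for E
  have hEvolterra : ∀ x : ℝ,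
      E x = exp (x • Cp) + ∫ y in (0:ℝ)..x, exp (y • Cp) * B * E (x - y) := by
    intro x
    have h := keyE Cp B x
    rw [hEdef]
    simp only []
    rw [h]
    abel
  -- Volterra equation for the partial sums
  have hSrec : ∀ N, ∀ x ∈ Icc (0:ℝ) x₀,
      S (N+1) x = exp (x • Cp) + ∫ y in (0:ℝ)..x, exp (y • Cp) * B * S N (x - y) := by
    intro N x hx
    have h1 : S (N+1) x = (∑ n ∈ Finset.range N, U (n+1) x) + U 0 x :=
      Finset.sum_range_succ' (fun n => U n x) N
    have h2 : ∀ n ∈ Finset.range N,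
        U (n+1) x = ∫ y in (0:ℝ)..x, exp (y • Cp) * B * U n (x - y) :=
      fun n _ => hUrec n x hx.1
    rw [h1, Finset.sum_congr rfl h2, hU1, add_comm]
    congr 1
    rw [← intervalIntegral.integral_finset_sum fun n _ =>
      hconvInt (U n) (hcontU n) x hx]
    refine intervalIntegral.integral_congr fun y _ => ?_
    rw [hSdef]
    simp only []
    rw [Finset.mul_sum]
  -- recursion for the difference
  have hDrec : ∀ N, ∀ x ∈ Icc (0:ℝ) x₀,
      E x - S (N+1) x = ∫ y in (0:ℝ)..x, exp (y • Cp) * B * (E (x - y) - S N (x - y)) := by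
    intro N x hx
    rw [hEvolterra x, hSrec N x hx, add_sub_add_left_eq_sub,
      ← intervalIntegral.integral_sub
        (hconvInt E hcontE.continuousOn x hx) (hconvInt (S N) (hcontS N) x hx)]
    exact intervalIntegral.integral_congr fun y _ => (mul_sub _ _ _).symm
  -- constants
  obtain ⟨c₁, hc₁⟩ := (isCompact_Icc (a := (0:ℝ)) (b := x₀)).exists_bound_of_continuousOn
    (continuous_expM Cp).continuousOn
  set c : ℝ := (p:ℝ)^2 * (max c₁ 0) * ‖B‖ with hcdef
  have hc0 : 0 ≤ c := by positivity
  have hc : ∀ y ∈ Icc (0:ℝ) x₀, ∀ Z : Matrix (Fin p) (Fin p) ℝ,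
      ‖exp (y • Cp) * B * Z‖ ≤ c * ‖Z‖ := by
    intro y hy Z
    calc ‖exp (y • Cp) * B * Z‖ ≤ (p:ℝ) * ‖exp (y • Cp) * B‖ * ‖Z‖ := norm_matmul _ _
      _ ≤ (p:ℝ) * ((p:ℝ) * ‖exp (y • Cp)‖ * ‖B‖) * ‖Z‖ := by
          have := norm_matmul (exp (y • Cp)) B
          gcongr
      _ ≤ (p:ℝ) * ((p:ℝ) * (max c₁ 0) * ‖B‖) * ‖Z‖ := by
          have h1 : ‖exp (y • Cp)‖ ≤ max c₁ 0 := le_trans (hc₁ y hy) (le_max_left _ _)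
          gcongr
      _ = c * ‖Z‖ := by rw [hcdef]; ring
  obtain ⟨M₀, hM₀⟩ := (isCompact_Icc (a := (0:ℝ)) (b := x₀)).exists_bound_of_continuousOn
    hcontE.continuousOn
  set M : ℝ := max M₀ 0 with hMdef
  have hM0 : 0 ≤ M := le_max_right _ _
  -- the Gronwall-type induction
  have hmain : ∀ N, ∀ y ∈ Icc (0:ℝ) x₀,
      ‖E y - S N y‖ ≤ M * (c ^ N * y ^ N / N.factorial) := by
    intro N
    induction N with
    | zero =>
      intro y hy
      have : S 0 y = 0 := by rw [hSdef]; simp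
      rw [this, sub_zero]
      have h2 : M * (c ^ 0 * y ^ 0 / (Nat.factorial 0)) = M := by simp
      rw [h2]
      exact le_trans (hM₀ y hy) (le_max_left _ _)
    | succ N ih =>
      intro x hx
      have hx1 : (0:ℝ) ≤ x := hx.1
      have hsub : ∀ y ∈ Icc (0:ℝ) x, x - y ∈ Icc (0:ℝ) x₀ := by
        intro y hy
        exact ⟨sub_nonneg.2 hy.2, by nlinarith [hy.1, hx.2]⟩
      have hInt1 : IntervalIntegrable
          (fun y => ‖exp (y • Cp) * B * (E (x - y) - S N (x - y))‖)
          MeasureTheory.volume 0 x :=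
        (hconvInt (fun y => E y - S N y) (hcontD N) x hx).norm
      have hInt2 : IntervalIntegrable (fun y => (M * (c ^ N / N.factorial) * c) * (x - y) ^ N)
          MeasureTheory.volume 0 x := by
        exact (continuous_const.mul ((continuous_const.sub continuous_id).pow N)).intervalIntegrable 0 x
      have hptw : ∀ y ∈ Icc (0:ℝ) x,
          ‖exp (y • Cp) * B * (E (x - y) - S N (x - y))‖
            ≤ (M * (c ^ N / N.factorial) * c) * (x - y) ^ N := by
        intro y hy
        calc ‖exp (y • Cp) * B * (E (x - y) - S N (x - y))‖
            ≤ c * ‖E (x - y) - S N (x - y)‖ := hc y ⟨hy.1, le_trans hy.2 hx.2⟩ _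
          _ ≤ c * (M * (c ^ N * (x - y) ^ N / N.factorial)) := by
              have := ih (x - y) (hsub y hy)
              gcongr
          _ = (M * (c ^ N / N.factorial) * c) * (x - y) ^ N := by ring
      have hpowint : (∫ y in (0:ℝ)..x, (x - y) ^ N) = x ^ (N+1) / (N+1) := by
        have h := intervalIntegral.integral_comp_sub_left
          (a := (0:ℝ)) (b := x) (fun u => u ^ N) x
        simp only [sub_zero, sub_self] at h
        rw [h, integral_pow]
        simp
      calc ‖E x - S (N+1) x‖
          = ‖∫ y in (0:ℝ)..x, exp (y • Cp) * B * (E (x - y) - S N (x - y))‖ := by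
            rw [hDrec N x hx]
        _ ≤ ∫ y in (0:ℝ)..x, ‖exp (y • Cp) * B * (E (x - y) - S N (x - y))‖ :=
            intervalIntegral.norm_integral_le_integral_norm hx1
        _ ≤ ∫ y in (0:ℝ)..x, (M * (c ^ N / N.factorial) * c) * (x - y) ^ N :=
            intervalIntegral.integral_mono_on hx1 hInt1 hInt2 hptw
        _ = (M * (c ^ N / N.factorial) * c) * ∫ y in (0:ℝ)..x, (x - y) ^ N := by
            rw [intervalIntegral.integral_const_mul]
        _ = M * (c ^ (N+1) * x ^ (N+1) / (N+1).factorial) := by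
            rw [hpowint, Nat.factorial_succ]
            have h1 : (N.factorial : ℝ) ≠ 0 := Nat.cast_ne_zero.2 N.factorial_ne_zero
            have h2 : ((N:ℝ) + 1) ≠ 0 := by positivity
            push_cast
            field_simp
            ring
  -- conclusion
  have hx₀' : x₀ ∈ Icc (0:ℝ) x₀ := ⟨hx₀, le_rfl⟩
  have htend0 : Tendsto (fun N : ℕ => M * (c ^ N * x₀ ^ N / N.factorial)) atTop (nhds 0) := by
    have h := FloorSemiring.tendsto_pow_div_factorial_atTop (c * x₀)
    have h2 := h.const_mul M
    rw [mul_zero] at h2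
    refine h2.congr fun N => ?_
    rw [mul_pow]
  have hSE : Tendsto (fun N : ℕ => S N x₀) atTop (nhds (E x₀)) := by
    refine tendsto_iff_norm_sub_tendsto_zero.2 ?_
    refine squeeze_zero (fun N => norm_nonneg _) (fun N => ?_) htend0
    rw [norm_sub_rev]
    exact hmain N x₀ hx₀'
  exact tendsto_nhds_unique (hconv x₀ hx₀) hSE
end
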